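/- Let A be a nonempty subset of ℝ^d, let x_1, …, x_N be points of ℝ^d, and let λ ≥ 0. Then the supremum over all tuples (y_1, …, y_N) in (ℝ^d)^N of the quantity (indicator that y_n ∈ A for at least one n) − λ ∑_{n=1}^N ‖y_n − x_n‖ equals (1 − λ · min_{1 ≤ n ≤ N} dist(x_n, A))^+, where dist(x, A) = inf_{z ∈ A} ‖z − x‖. -/
import Mathlib


open Classical

/-- inner maximization identity for the rare-set probability dual:
`sup_y [1{∃ n, y n ∈ A} − λ ∑ ‖y n − x n‖] = (1 − λ · min_n dist(x_n, A))⁺`. -/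
theorem stmt_3 (d N : ℕ) (hN : 0 < N) (A : Set (Fin d → ℝ)) (hA : A.Nonempty)
    (x : Fin N → Fin d → ℝ) (lam : ℝ) (hlam : 0 ≤ lam) :
    sSup {v : ℝ | ∃ y : Fin N → Fin d → ℝ,
        v = (if ∃ n, y n ∈ A then (1 : ℝ) else 0) - lam * ∑ n, ‖y n - x n‖}
      = max (1 - lam * ⨅ n, Metric.infDist (x n) A) 0 := by
  have hne : Nonempty (Fin N) := ⟨⟨0, hN⟩⟩
  set m := ⨅ n, Metric.infDist (x n) A with hm
  have hbdd_inf : BddBelow (Set.range fun n => Metric.infDist (x n) A) :=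
    Set.Finite.bddBelow (Set.finite_range _)
  have hm_le : ∀ n, m ≤ Metric.infDist (x n) A := fun n => ciInf_le hbdd_inf n
  set S := {v : ℝ | ∃ y : Fin N → Fin d → ℝ,
      v = (if ∃ n, y n ∈ A then (1 : ℝ) else 0) - lam * ∑ n, ‖y n - x n‖} with hS
  have hub : ∀ v ∈ S, v ≤ max (1 - lam * m) 0 := by
    rintro v ⟨y, rfl⟩
    by_cases h : ∃ n, y n ∈ A
    · obtain ⟨n₀, hn₀⟩ := h
      rw [if_pos ⟨n₀, hn₀⟩]
      refine le_max_of_le_left ?_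
      have h1 : m ≤ ‖y n₀ - x n₀‖ := by
        refine (hm_le n₀).trans ?_
        calc Metric.infDist (x n₀) A ≤ dist (x n₀) (y n₀) :=
              Metric.infDist_le_dist_of_mem hn₀
          _ = ‖y n₀ - x n₀‖ := by rw [dist_eq_norm, norm_sub_rev]
      have h2 : ‖y n₀ - x n₀‖ ≤ ∑ n, ‖y n - x n‖ :=
        Finset.single_le_sum (f := fun n => ‖y n - x n‖) (fun n _ => norm_nonneg _) (Finset.mem_univ n₀)
      have := mul_le_mul_of_nonneg_left (h1.trans h2) hlam
      linarith
    · rw [if_neg h]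
      have h0 : 0 ≤ lam * ∑ n, ‖y n - x n‖ :=
        mul_nonneg hlam (Finset.sum_nonneg fun n _ => norm_nonneg _)
      have := le_max_right (1 - lam * m) (0 : ℝ)
      linarith
  have hSbdd : BddAbove S := ⟨_, hub⟩
  refine le_antisymm (Real.sSup_le hub (le_max_right _ _)) (max_le ?_ ?_)
  · -- 1 - lam * m ≤ sSup S
    refine le_of_forall_pos_le_add ?_
    intro ε hε
    rcases eq_or_lt_of_le hlam with hl0 | hlpos
    · -- lam = 0
      obtain ⟨z, hz⟩ := hA
      have hmem : (1 : ℝ) - lam * ∑ n, ‖(fun _ => z) n - x n‖ ∈ S :=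
        ⟨fun _ => z, by rw [if_pos ⟨⟨0, hN⟩, hz⟩]⟩
      have hle := le_csSup hSbdd hmem
      rw [← hl0] at hle ⊢
      simp only [zero_mul, sub_zero] at hle ⊢
      linarith
    · have hεl : 0 < ε / lam := div_pos hε hlpos
      obtain ⟨n₀, hn₀⟩ := Finite.exists_min fun n => Metric.infDist (x n) A
      have hmeq : Metric.infDist (x n₀) A = m :=
        le_antisymm (le_ciInf hn₀) (hm_le n₀)
      have hlt : Metric.infDist (x n₀) A < m + ε / lam := by
        rw [hmeq]; linarith
      obtain ⟨z, hzA, hzd⟩ := (Metric.infDist_lt_iff hA).mp hlt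
      set y : Fin N → Fin d → ℝ := Function.update x n₀ z with hy
      have hsum : ∑ n, ‖y n - x n‖ = ‖z - x n₀‖ := by
        rw [Finset.sum_eq_single n₀]
        · rw [hy, Function.update_self]
        · intro n _ hnn
          rw [hy, Function.update_of_ne hnn, sub_self, norm_zero]
        · intro h; exact absurd (Finset.mem_univ n₀) h
      have hmem : (1 : ℝ) - lam * ∑ n, ‖y n - x n‖ ∈ S :=
        ⟨y, by rw [if_pos ⟨n₀, by rw [hy, Function.update_self]; exact hzA⟩]⟩
      have hle := le_csSup hSbdd hmem
      rw [hsum] at hle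
      have hnorm : ‖z - x n₀‖ < m + ε / lam := by
        rwa [← norm_sub_rev, ← dist_eq_norm]
      have hmul : lam * ‖z - x n₀‖ ≤ lam * (m + ε / lam) :=
        mul_le_mul_of_nonneg_left hnorm.le hlam
      have hcanc : lam * (ε / lam) = ε := mul_div_cancel₀ ε (ne_of_gt hlpos)
      have : lam * (m + ε / lam) = lam * m + ε := by rw [mul_add, hcanc]
      linarith
  · -- 0 ≤ sSup S
    have hmem : (if ∃ n, x n ∈ A then (1 : ℝ) else 0) - lam * ∑ n, ‖x n - x n‖ ∈ S :=
      ⟨x, rfl⟩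
    have hle := le_csSup hSbdd hmem
    have hsum : ∑ n : Fin N, ‖x n - x n‖ = 0 := by
      simp
    rw [hsum, mul_zero, sub_zero] at hle
    split_ifs at hle with h
    · linarith
    · exact hle
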